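/- Every nonempty Dyck path Q strictly above the diagonal except at its endpoints admits a unique prime decomposition Q = n_0 Q_1 n_1 ⋯ n_k Q_k where each Q_i is a prime Dyck path (translated to start at its initial point), each n_i is a (possibly empty) sequence of north steps, and n_0 is nonempty. -/

import Mathlib

/-!
Dyck paths are encoded as lists of booleans: `true` is a north step `(0,1)`,
`false` is an east step `(1,0)`.  A Dyck path of semilength `n` goes from
`(0,0)` to `(n,n)` staying weakly above the diagonal `y = x`.
-/

/-- `D` is a Dyck word: every prefix has at least as many north steps as east
steps, and the total numbers agree. -/
def isDyck (D : List Bool) : Bool :=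
  ((List.range (D.length + 1)).all fun k =>
    (D.take k).count false ≤ (D.take k).count true) &&
  (D.count true == D.count false)

/-- The (finite) set of Dyck paths of semilength `n`. -/
def dyckPaths (n : ℕ) : Finset (List Bool) :=
  ((List.replicate n true ++ List.replicate n false).permutations.filter isDyck).toFinset

/-- The number of returns: east steps ending on the diagonal `y = x`. -/
def returns (D : List Bool) : ℕ :=
  ((List.range D.length).filter fun i =>
    (D[i]? == some false) &&
    ((D.take (i + 1)).count true == (D.take (i + 1)).count false)).length

/-- `ldr D`: the `y`-coordinate of the midpoint of the last double rise
(last pair of consecutive north steps), `0` if there is no double rise. -/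
def ldr (D : List Bool) : ℕ :=
  match ((List.range D.length).filter fun i =>
      (D[i]? == some true) && (D[i+1]? == some true)).getLast? with
  | some i => (D.take (i + 1)).count true
  | none => 0

/-- The set of `x`-coordinates (plus 1) of the north steps of `D`. -/
def rises (D : List Bool) : Finset ℕ :=
  (((List.range D.length).filter fun i => D[i]? == some true).map
    fun i => (D.take i).count false + 1).toFinset

/-- The multiset of `x`-coordinates (plus 1) of the north steps of `D`. -/
def risesM (D : List Bool) : Multiset ℕ :=
  ↑(((List.range D.length).filter fun i => D[i]? == some true).map
    fun i => (D.take i).count false + 1)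

/-- `D` ends with a single east step: its last maximal run of east steps has
length one, i.e. `D` ends with a north step followed by one east step. -/
def EndsSingleEast (D : List Bool) : Prop :=
  ∃ P, D = P ++ [true, false]

/-- `R` contains only single rises: no two consecutive north steps. -/
def SingleRises (R : List Bool) : Prop :=
  ∀ i, ¬ (R[i]? = some true ∧ R[i+1]? = some true)

/-- A prime Dyck path: a Dyck path whose only return is its final east step. -/
def IsPrimeDyck (Q : List Bool) : Prop :=
  isDyck Q = true ∧ Q ≠ [] ∧ returns Q = 1

/-- Concatenation `n₀ Q₁ n₁ Q₂ ⋯` of runs of north steps and paths, encoded as a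
list of pairs `(nᵢ₋₁, Qᵢ)`. -/
def primeBlocks (l : List (ℕ × List Bool)) : List Bool :=
  (l.map fun p => List.replicate p.1 true ++ p.2).flatten


namespace Stmt5Aux

/-- Signed excess: number of `true`s minus number of `false`s. -/
def bal (S : List Bool) : ℤ := (S.count true : ℤ) - (S.count false : ℤ)

@[simp] lemma bal_nil : bal [] = 0 := by simp [bal]

lemma bal_append (A B : List Bool) : bal (A ++ B) = bal A + bal B := by
  simp [bal, List.count_append]; ring

@[simp] lemma bal_replicate (n : ℕ) : bal (List.replicate n true) = n := by
  simp [bal, List.count_replicate]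

lemma count_le_iff {A : List Bool} :
    (A.count false ≤ A.count true) ↔ 0 ≤ bal A := by
  unfold bal; omega

lemma count_eq_iff {A : List Bool} :
    (A.count true = A.count false) ↔ bal A = 0 := by
  unfold bal; omega

lemma bal_singleton (b : Bool) : bal [b] = if b = true then 1 else -1 := by
  cases b <;> simp [bal]

lemma bal_take_succ (S : List Bool) (i : ℕ) (h : i < S.length) :
    bal (S.take (i+1)) = bal (S.take i) + (if S[i] = true then 1 else -1) := by
  rw [List.take_succ, bal_append, List.getElem?_eq_getElem h]
  simp [bal_singleton]

lemma bal_take_step (S : List Bool) (i : ℕ) :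
    bal (S.take (i+1)) ≤ bal (S.take i) + 1 := by
  rcases lt_or_ge i S.length with h | h
  · rw [bal_take_succ S i h]; split <;> omega
  · rw [List.take_of_length_le h, List.take_of_length_le (by omega)]; omega

/-- Characterization of `isDyck` in terms of `bal`. -/
lemma isDyck_iff {Q : List Bool} :
    isDyck Q = true ↔ (∀ i, 0 ≤ bal (Q.take i)) ∧ bal Q = 0 := by
  unfold isDyck
  rw [Bool.and_eq_true, List.all_eq_true, beq_iff_eq]
  constructor
  · rintro ⟨h1, h2⟩
    have h2' : bal Q = 0 := count_eq_iff.mp h2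
    refine ⟨fun i => ?_, h2'⟩
    rcases le_or_gt i Q.length with h | h
    · have := h1 i (by simp only [List.mem_range]; omega)
      rw [decide_eq_true_eq] at this
      exact count_le_iff.mp this
    · rw [List.take_of_length_le (le_of_lt h)]; omega
  · rintro ⟨h1, h2⟩
    refine ⟨fun i _ => ?_, count_eq_iff.mpr h2⟩
    exact decide_eq_true (count_le_iff.mpr (h1 i))

/-- The predicate counted by `returns`. -/
lemma returns_eq (Q : List Bool) :
    returns Q = ((List.range Q.length).filter fun i =>
      decide (Q[i]? = some false ∧ bal (Q.take (i+1)) = 0)).length := by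
  unfold returns
  congr 1
  apply List.filter_congr
  intro i _
  rw [Bool.eq_iff_iff]
  simp only [Bool.and_eq_true, beq_iff_eq, decide_eq_true_eq]
  rw [count_eq_iff]

/-- If a word is nonempty, ends at level 0, its interior levels are positive,
and levels are nonnegative, then it is a prime Dyck path. -/
lemma isPrime_of (Q : List Bool) (hne : Q ≠ [])
    (hint : ∀ i, 0 < i → i < Q.length → 0 < bal (Q.take i))
    (hQ : bal Q = 0) : IsPrimeDyck Q := by
  have hlen : 1 ≤ Q.length := List.length_pos_iff.mpr hne
  have hnonneg : ∀ i, 0 ≤ bal (Q.take i) := by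
    intro i
    rcases Nat.eq_zero_or_pos i with rfl | hi
    · simp
    rcases lt_or_ge i Q.length with h | h
    · exact le_of_lt (hint i hi h)
    · rw [List.take_of_length_le h]; omega
  refine ⟨isDyck_iff.mpr ⟨hnonneg, hQ⟩, hne, ?_⟩
  -- the last step is an east step
  have hlast : Q[Q.length - 1]? = some false := by
    have h1 : Q.length - 1 < Q.length := by omega
    rw [List.getElem?_eq_getElem h1]
    have hts := bal_take_succ Q (Q.length - 1) h1
    rw [List.take_of_length_le (show Q.length ≤ Q.length - 1 + 1 by omega), hQ] at hts
    cases hb : Q[Q.length - 1]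
    · rfl
    · exfalso
      rw [hb, if_pos rfl] at hts
      rcases Nat.eq_or_lt_of_le hlen with h2 | h2
      · rw [show Q.length - 1 = 0 by omega] at hts; simp at hts
      · have := hint (Q.length - 1) (by omega) (by omega); omega
  rw [returns_eq]
  have hsplit : Q.length = (Q.length - 1) + 1 := by omega
  rw [hsplit, List.range_succ, List.filter_append]
  have h1 : (List.range (Q.length - 1)).filter (fun i =>
      decide (Q[i]? = some false ∧ bal (Q.take (i+1)) = 0)) = [] := by
    rw [List.filter_eq_nil_iff]
    intro i hi
    rw [List.mem_range] at hi
    simp only [decide_eq_true_eq, not_and]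
    intro _
    have := hint (i+1) (by omega) (by omega)
    omega
  have h2 : [Q.length - 1].filter (fun i =>
      decide (Q[i]? = some false ∧ bal (Q.take (i+1)) = 0)) = [Q.length - 1] := by
    have hpred : decide (Q[Q.length - 1]? = some false ∧
        bal (Q.take (Q.length - 1 + 1)) = 0) = true := by
      rw [decide_eq_true_eq]
      exact ⟨hlast, by rw [List.take_of_length_le (by omega)]; exact hQ⟩
    rw [List.filter_singleton, hpred, cond_true]
  rw [h1, h2]
  simp

/-- A prime Dyck path has positive level strictly inside. -/
lemma prime_interior {Q : List Bool} (h : IsPrimeDyck Q) :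
    ∀ i, 0 < i → i < Q.length → 0 < bal (Q.take i) := by
  obtain ⟨hd, hne, hret⟩ := h
  obtain ⟨hnonneg, hQ⟩ := isDyck_iff.mp hd
  intro i hi hilen
  by_contra hcon
  have hzero : bal (Q.take i) = 0 := le_antisymm (not_lt.mp hcon) (hnonneg i)
  -- step i-1 is an east step and a return
  have hstep : ∀ j, j + 1 ≤ Q.length → bal (Q.take (j+1)) = 0 → Q[j]? = some false := by
    intro j hj hbal
    have hjl : j < Q.length := by omega
    rw [List.getElem?_eq_getElem hjl]
    have := bal_take_succ Q j hjl
    have hnn := hnonneg j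
    cases hb : Q[j]
    · rfl
    · rw [hb, if_pos rfl] at this; omega
  have hi1 : i - 1 + 1 = i := by omega
  have hr1 : Q[i-1]? = some false := hstep (i-1) (by omega) (by rw [hi1]; exact hzero)
  have hr2 : Q[Q.length - 1]? = some false := by
    apply hstep (Q.length - 1) (by omega)
    rw [show Q.length - 1 + 1 = Q.length by omega, List.take_of_length_le (le_refl _)]
    exact hQ
  -- two distinct returns
  have hm1 : (i-1) ∈ (List.range Q.length).filter (fun j =>
      decide (Q[j]? = some false ∧ bal (Q.take (j+1)) = 0)) := by
    rw [List.mem_filter, List.mem_range, decide_eq_true_eq]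
    exact ⟨by omega, hr1, by rw [hi1]; exact hzero⟩
  have hm2 : (Q.length - 1) ∈ (List.range Q.length).filter (fun j =>
      decide (Q[j]? = some false ∧ bal (Q.take (j+1)) = 0)) := by
    rw [List.mem_filter, List.mem_range, decide_eq_true_eq]
    refine ⟨by omega, hr2, ?_⟩
    rw [show Q.length - 1 + 1 = Q.length by omega, List.take_of_length_le (le_refl _)]
    exact hQ
  have hne2 : (i-1) ≠ (Q.length - 1) := by omega
  rw [returns_eq] at hret
  rcases List.length_eq_one_iff.mp hret with ⟨a, ha⟩
  rw [ha, List.mem_singleton] at hm1 hm2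
  exact hne2 (hm1.trans hm2.symm)

/-- Levels inside a prime Dyck path are nonnegative, total is zero. -/
lemma prime_bal {Q : List Bool} (h : IsPrimeDyck Q) : bal Q = 0 :=
  (isDyck_iff.mp h.1).2

lemma prime_getLast {Q : List Bool} (h : IsPrimeDyck Q) : Q.getLast? = some false := by
  obtain ⟨hd, hne, -⟩ := h
  obtain ⟨hnonneg, hQ⟩ := isDyck_iff.mp hd
  have hlen : 1 ≤ Q.length := List.length_pos_iff.mpr hne
  have h1 : Q.length - 1 < Q.length := by omega
  rw [List.getLast?_eq_getElem?, List.getElem?_eq_getElem h1]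
  have := bal_take_succ Q (Q.length - 1) h1
  rw [show Q.length - 1 + 1 = Q.length by omega, List.take_of_length_le (le_refl _), hQ] at this
  have hnn := hnonneg (Q.length - 1)
  cases hb : Q[Q.length - 1]
  · rfl
  · rw [hb, if_pos rfl] at this; omega

/-- Discrete IVT from above: last index at level `m`. -/
lemma exists_last_eq (f : ℕ → ℤ) (hstep : ∀ i, f (i+1) ≤ f i + 1) (b : ℕ)
    (m : ℤ) (h0 : f 0 ≤ m) (hb : m < f b) :
    ∃ p, p < b ∧ f p = m ∧ ∀ j, p < j → j ≤ b → m < f j := by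
  classical
  set P : ℕ → Prop := fun i => f i ≤ m with hP
  have hb0 : b ≠ 0 := by rintro rfl; omega
  set p := Nat.findGreatest P b with hp
  have hPp : P p := Nat.findGreatest_spec (Nat.zero_le b) h0
  have hpb : p ≤ b := Nat.findGreatest_le b
  have hpnb : p ≠ b := by intro h; rw [h] at hPp; simp only [P] at hPp; omega
  have hgr : ∀ j, p < j → j ≤ b → m < f j := by
    intro j hj hjb
    have := Nat.findGreatest_is_greatest (k := j) (P := P) (n := b) hj hjb
    simp only [P, not_le] at this
    exact this
  refine ⟨p, by omega, ?_, hgr⟩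
  have h1 : m < f (p + 1) := hgr (p+1) (by omega) (by omega)
  have h2 := hstep p
  simp only [P] at hPp
  omega

lemma primeBlocks_nil : primeBlocks [] = [] := rfl

lemma primeBlocks_append (a b : List (ℕ × List Bool)) :
    primeBlocks (a ++ b) = primeBlocks a ++ primeBlocks b := by
  simp [primeBlocks]

lemma primeBlocks_cons (p : ℕ × List Bool) (l : List (ℕ × List Bool)) :
    primeBlocks (p :: l) = List.replicate p.1 true ++ p.2 ++ primeBlocks l := by
  simp [primeBlocks]

lemma primeBlocks_singleton (p : ℕ × List Bool) :
    primeBlocks [p] = List.replicate p.1 true ++ p.2 := by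
  simp [primeBlocks]

lemma primeBlocks_eq_nil {l : List (ℕ × List Bool)}
    (h : ∀ p ∈ l, IsPrimeDyck p.2) (he : primeBlocks l = []) : l = [] := by
  cases l with
  | nil => rfl
  | cons p l =>
    rw [primeBlocks_cons] at he
    rcases List.append_eq_nil_iff.mp he with ⟨he1, -⟩
    rcases List.append_eq_nil_iff.mp he1 with ⟨-, he2⟩
    exact absurd he2 (h p List.mem_cons_self).2.1

lemma primeBlocks_getLast {l : List (ℕ × List Bool)} (hne : l ≠ [])
    (h : ∀ p ∈ l, IsPrimeDyck p.2) :
    (primeBlocks l).getLast? = some false := by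
  have hdrop := List.dropLast_append_getLast hne
  set q := l.getLast hne with hq
  have hqmem : q ∈ l := List.getLast_mem hne
  have hprime := h q hqmem
  rw [← hdrop, primeBlocks_append, primeBlocks_singleton]
  rw [List.getLast?_append, List.getLast?_append]
  rw [prime_getLast hprime]
  rfl

lemma replicate_getLast {k : ℕ} (hk : 1 ≤ k) :
    (List.replicate k true).getLast? = some true := by
  rw [List.getLast?_eq_getElem?, List.length_replicate, List.getElem?_replicate,
    if_pos (by omega)]

lemma append_replicate_getLast {X : List Bool} {k : ℕ} (hk : 1 ≤ k) :
    (X ++ List.replicate k true).getLast? = some true := by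
  rw [List.getLast?_append, replicate_getLast hk]
  rfl

/-- The main decomposition lemma: without the strictness/nonemptiness
conditions, every weakly-above word ending in an east step (or empty)
has a unique prime decomposition. -/
lemma decomp : ∀ (N : ℕ) (S : List Bool), S.length ≤ N →
    (∀ i, 0 ≤ bal (S.take i)) → (S = [] ∨ S.getLast? = some false) →
    ∃! l : List (ℕ × List Bool),
      S = primeBlocks l ∧ ∀ p ∈ l, IsPrimeDyck p.2 := by
  intro N
  induction N with
  | zero =>
    intro S hlen _ _
    have hS : S = [] := List.eq_nil_of_length_eq_zero (by omega)
    subst hS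
    refine ⟨[], ⟨rfl, by simp⟩, ?_⟩
    rintro l ⟨hl, hprime⟩
    exact primeBlocks_eq_nil hprime hl.symm
  | succ N IH =>
    intro S hlen h0 hlast
    rcases hlast with rfl | hlast
    · refine ⟨[], ⟨rfl, by simp⟩, ?_⟩
      rintro l ⟨hl, hprime⟩
      exact primeBlocks_eq_nil hprime hl.symm
    have hSne : S ≠ [] := by rintro rfl; simp at hlast
    have hL : 1 ≤ S.length := List.length_pos_iff.mpr hSne
    -- the last step is east, so the level before it is `bal S + 1`
    have hlast' : S[S.length - 1] = false := by
      rw [List.getLast?_eq_getElem?, List.getElem?_eq_getElem (by omega)] at hlast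
      exact Option.some_injective _ hlast
    have hpre : bal (S.take (S.length - 1)) = bal S + 1 := by
      have hts := bal_take_succ S (S.length - 1) (by omega)
      rw [hlast', show S.length - 1 + 1 = S.length by omega,
        List.take_of_length_le (le_refl _)] at hts
      simp only [Bool.false_eq_true, if_false] at hts
      omega
    -- find the last index `p < S.length` at level `bal S`
    obtain ⟨p, hpb, hpe, hpgr⟩ := exists_last_eq (fun i => bal (S.take i))
      (bal_take_step S) (S.length - 1) (bal S)
      (by simpa using h0 S.length |>.trans_eq (by rw [List.take_of_length_le (le_refl _)]))
      (by show bal S < bal (S.take (S.length - 1)); omega)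
    -- `Qk` is the last prime block
    set Qk : List Bool := S.drop p with hQk
    set A : List Bool := S.take p with hA
    have hSA : A ++ Qk = S := List.take_append_drop p S
    have hQklen : Qk.length = S.length - p := by rw [hQk, List.length_drop]
    have hQkne : Qk ≠ [] := by
      intro h; rw [h] at hQklen; simp at hQklen; omega
    have hbalA : bal A = bal S := hpe
    have hbalQk : bal Qk = 0 := by
      have := bal_append A Qk
      rw [hSA, hbalA] at this; omega
    have htakeQk : ∀ i, bal (Qk.take i) = bal (S.take (p + i)) - bal S := by
      intro i
      have := List.take_add (l := S) (i := p) (j := i)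
      have h2 := bal_append (S.take p) ((S.drop p).take i)
      rw [← this] at h2
      rw [hQk]
      have : bal (S.take p) = bal S := hpe
      omega
    have hQkint : ∀ i, 0 < i → i < Qk.length → 0 < bal (Qk.take i) := by
      intro i hi hilen
      rw [htakeQk i]
      have := hpgr (p + i) (by omega) (by omega)
      omega
    have hQkprime : IsPrimeDyck Qk := isPrime_of Qk hQkne hQkint hbalQk
    -- split off the trailing run of north steps of `A`
    set n : ℕ := (A.reverse.takeWhile (fun b => b)).length with hn
    set T : List Bool := (A.reverse.dropWhile (fun b => b)).reverse with hT
    have hAeq : T ++ List.replicate n true = A := by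
      have h1 := List.takeWhile_append_dropWhile (p := fun b => b) (l := A.reverse)
      have h2 := congrArg List.reverse h1
      rw [List.reverse_append, List.reverse_reverse] at h2
      rw [← h2, hT]
      congr 1
      symm
      rw [List.eq_replicate_iff]
      refine ⟨by rw [List.length_reverse], ?_⟩
      intro b hb
      rw [List.mem_reverse] at hb
      have := List.mem_takeWhile_imp hb
      simpa using this
    have hTlast : T = [] ∨ T.getLast? = some false := by
      rcases eq_or_ne T [] with h | h
      · exact Or.inl h
      · right
        have hDne : A.reverse.dropWhile (fun b => b) ≠ [] := by
          intro h2
          apply h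
          rw [hT, h2, List.reverse_nil]
        have hDl : 0 < (A.reverse.dropWhile (fun b => b)).length := List.length_pos_iff.mpr hDne
        have hnot := List.dropWhile_get_zero_not (fun b => b) A.reverse hDl
        rw [hT, List.getLast?_reverse, List.head?_eq_getElem?, List.getElem?_eq_getElem hDl]
        cases hb : (A.reverse.dropWhile (fun b => b)).get ⟨0, hDl⟩ with
        | false =>
          rw [List.get_eq_getElem] at hb
          rw [hb]
        | true => exact absurd hb hnot
    have hTS : T ++ (List.replicate n true ++ Qk) = S := by
      rw [← List.append_assoc, hAeq, hSA]
    have hT0 : ∀ i, 0 ≤ bal (T.take i) := by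
      intro i
      rcases le_or_gt i T.length with h | h
      · have he : T.take i = S.take i := by
          rw [← hTS, List.take_append_of_le_length h]
        rw [he]; exact h0 i
      · rw [List.take_of_length_le (le_of_lt h)]
        have he : T = S.take T.length := by rw [← hTS, List.take_left]
        rw [he]; exact h0 _
    have hTlen : T.length ≤ N := by
      have h1 : T.length ≤ A.length := by rw [← hAeq]; simp
      have h2 : A.length ≤ p := by rw [hA]; simp
      omega
    obtain ⟨lT, ⟨hlT1, hlT2⟩, hlTuniq⟩ := IH T hTlen hT0 hTlast
    refine ⟨lT ++ [(n, Qk)], ⟨?_, ?_⟩, ?_⟩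
    · rw [primeBlocks_append, primeBlocks_singleton, ← hlT1]
      rw [← List.append_assoc, hAeq, hSA]
    · intro q hq
      rcases List.mem_append.mp hq with h | h
      · exact hlT2 q h
      · rw [List.mem_singleton] at h; rw [h]; exact hQkprime
    -- uniqueness
    · rintro l' ⟨hl'S, hl'p⟩
      have hl'ne : l' ≠ [] := by
        rintro rfl; rw [primeBlocks_nil] at hl'S; exact hSne hl'S
      obtain ⟨q', hq'⟩ : ∃ q', l' = l'.dropLast ++ [q'] :=
        ⟨l'.getLast hl'ne, (List.dropLast_append_getLast hl'ne).symm⟩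
      have hq'mem : q' ∈ l' := by rw [hq']; simp
      have hQ'prime : IsPrimeDyck q'.2 := hl'p q' hq'mem
      set T' : List Bool := primeBlocks l'.dropLast with hT'
      set n' : ℕ := q'.1 with hn'
      set Q' : List Bool := q'.2 with hQ'
      have hl''p : ∀ q ∈ l'.dropLast, IsPrimeDyck q.2 := by
        intro q hq
        exact hl'p q (by rw [hq']; exact List.mem_append.mpr (Or.inl hq))
      have hSsplit : S = (T' ++ List.replicate n' true) ++ Q' := by
        rw [hl'S, hq', primeBlocks_append, primeBlocks_singleton, List.append_assoc]
      set p' : ℕ := T'.length + n' with hp'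
      have hfrontlen : (T' ++ List.replicate n' true).length = p' := by simp [hp']
      have hSlen' : S.length = p' + Q'.length := by
        rw [hSsplit]; simp [hp']; omega
      have hQ'len : 1 ≤ Q'.length := List.length_pos_iff.mpr hQ'prime.2.1
      have htake' : S.take p' = T' ++ List.replicate n' true := by
        rw [hSsplit]; exact List.take_left' hfrontlen
      have hdrop' : S.drop p' = Q' := by
        rw [hSsplit]; exact List.drop_left' hfrontlen
      have hbalp' : bal (S.take p') = bal S := by
        have h1 : bal S = bal (T' ++ List.replicate n' true) + bal Q' := by
          rw [hSsplit, bal_append]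
        rw [htake', h1, prime_bal hQ'prime]; omega
      have hint' : ∀ j, p' < j → j < S.length → bal S < bal (S.take j) := by
        intro j hj hjlen
        have hji : j = p' + (j - p') := by omega
        have h2 := List.take_add (l := S) (i := p') (j := j - p')
        have h3 := bal_append (S.take p') ((S.drop p').take (j - p'))
        rw [← h2, ← hji] at h3
        rw [hdrop'] at h3
        have h4 := prime_interior hQ'prime (j - p') (by omega) (by omega)
        rw [h3, hbalp']
        omega
      -- conclude `p' = p`
      have hpe' : bal (S.take p) = bal S := hpe
      have hpp' : p' = p := by
        by_contra hne'
        rcases lt_or_gt_of_ne hne' with h | h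
        · -- p' < p : contradicts interior positivity at p
          have := hint' p h (by omega)
          omega
        · -- p < p' : contradicts that p is the last at level `bal S`
          have := hpgr p' h (by omega)
          omega
      have hQ'Qk : Q' = Qk := by rw [← hdrop', hpp', hQk]
      have hfront : T' ++ List.replicate n' true = A := by
        rw [← htake', hpp', hA]
      -- `n' = n`
      have hT'last : T' = [] ∨ T'.getLast? = some false := by
        rcases eq_or_ne l'.dropLast [] with h | h
        · left; rw [hT', h, primeBlocks_nil]
        · right; exact primeBlocks_getLast h hl''p
      have hnn' : n' = n := by
        by_contra hne'
        rcases lt_or_gt_of_ne hne' with h | h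
        · -- n' < n : T' ends with true, impossible
          have h1 : T' ++ List.replicate n' true
              = (T ++ List.replicate (n - n') true) ++ List.replicate n' true := by
            rw [List.append_assoc, ← List.replicate_add,
              show n - n' + n' = n by omega, hAeq, hfront]
          have h2 : T' = T ++ List.replicate (n - n') true := List.append_cancel_right h1
          have h3 : T'.getLast? = some true := by
            rw [h2]; exact append_replicate_getLast (by omega)
          rcases hT'last with h4 | h4
          · rw [h4] at h3; simp at h3
          · rw [h4] at h3; simp at h3
        · -- n < n' : T ends with true, impossible
          have h1 : T ++ List.replicate n true
              = (T' ++ List.replicate (n' - n) true) ++ List.replicate n true := by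
            rw [List.append_assoc, ← List.replicate_add,
              show n' - n + n = n' by omega, hfront, hAeq]
          have h2 : T = T' ++ List.replicate (n' - n) true := List.append_cancel_right h1
          have h3 : T.getLast? = some true := by
            rw [h2]; exact append_replicate_getLast (by omega)
          rcases hTlast with h4 | h4
          · rw [h4] at h2
            have h5 := congrArg List.length h2
            simp at h5
            omega
          · rw [h4] at h3; simp at h3
      have hTT' : T' = T := by
        apply List.append_cancel_right (bs := List.replicate n true)
        rw [← hnn', hfront, ← hAeq, hnn']
      have hl''eq : l'.dropLast = lT := by
        apply hlTuniq
        exact ⟨by rw [← hTT', hT'], hl''p⟩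
      have hq'eq : q' = (n, Qk) := by
        rw [← hnn', ← hQ'Qk]
      rw [hq', hl''eq, hq'eq]

end Stmt5Aux

/-- Every nonempty path staying strictly above the diagonal after its start
(and ending with an east step, as the middle factor `Q` of the decomposition
does) has a unique prime decomposition `n₀ Q₁ n₁ ⋯ nₖ₋₁ Qₖ` with each `Qᵢ`
prime, the `nᵢ` runs of north steps, and `n₀` nonempty. -/
theorem stmt5 (Q : List Bool) (hne : Q ≠ [])
    (hstrict : ∀ k, 1 ≤ k → k ≤ Q.length →
      (Q.take k).count false < (Q.take k).count true)
    (hlast : Q.getLast? = some false) :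
    ∃! l : List (ℕ × List Bool),
      Q = primeBlocks l ∧ l ≠ [] ∧ (∀ p ∈ l, IsPrimeDyck p.2) ∧
      1 ≤ (l.headI).1 := by
  classical
  have hlen1 : 1 ≤ Q.length := List.length_pos_iff.mpr hne
  have hstrict' : ∀ k, 1 ≤ k → k ≤ Q.length → 0 < Stmt5Aux.bal (Q.take k) := by
    intro k h1 h2
    have := hstrict k h1 h2
    unfold Stmt5Aux.bal
    omega
  have h0 : ∀ i, 0 ≤ Stmt5Aux.bal (Q.take i) := by
    intro i
    rcases Nat.eq_zero_or_pos i with rfl | hi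
    · simp [Stmt5Aux.bal]
    rcases le_or_gt i Q.length with h | h
    · exact le_of_lt (hstrict' i hi h)
    · rw [List.take_of_length_le (le_of_lt h)]
      have h3 := hstrict' Q.length hlen1 (le_refl _)
      rw [List.take_of_length_le (le_refl _)] at h3
      omega
  obtain ⟨l, ⟨hl1, hl2⟩, hluniq⟩ :=
    Stmt5Aux.decomp Q.length Q (le_refl _) h0 (Or.inr hlast)
  have hlne : l ≠ [] := by
    rintro rfl
    exact hne hl1
  have hhead : 1 ≤ l.headI.1 := by
    cases l with
    | nil => exact absurd rfl hlne
    | cons q l0 =>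
      simp only [List.headI]
      by_contra hc
      have hq0 : q.1 = 0 := by omega
      have hprime := hl2 q (List.mem_cons_self)
      have hQsplit : Q = q.2 ++ primeBlocks l0 := by
        rw [hl1, Stmt5Aux.primeBlocks_cons, hq0]
        simp
      have hlen2 : q.2.length ≤ Q.length := by rw [hQsplit]; simp
      have hlenpos : 1 ≤ q.2.length := List.length_pos_iff.mpr hprime.2.1
      have htk : Q.take q.2.length = q.2 := by rw [hQsplit, List.take_left]
      have hb := hstrict' q.2.length hlenpos hlen2
      rw [htk, Stmt5Aux.prime_bal hprime] at hb
      exact lt_irrefl 0 hb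
  refine ⟨l, ⟨hl1, hlne, hl2, hhead⟩, ?_⟩
  rintro l' ⟨h1, h2, h3, h4⟩
  exact hluniq l' ⟨h1, h3⟩
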